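/- Let (X, Σ, ν) be a finite measure space, let {f_n} and f be measurable nonnegative functions with f_n → f ν-a.e., and let {μ_n}, μ be nonnegative measures absolutely continuous with respect to ν with μ_n(A) → μ(A) for every measurable A. If lim_{n→∞} μ_n({f_n = 0}) = μ({f = 0}), then lim_{n→∞} μ_n({f_n = 0} Δ {f = 0}) = 0, where Δ denotes the symmetric difference of sets. -/

import Mathlib

open MeasureTheory Filter Topology
open ENNReal

/-- ε-δ characterization of absolute continuity for a finite measure. -/
lemma exists_delta_of_ac {X : Type*} [MeasurableSpace X] {μ ν : Measure X}
    [IsFiniteMeasure μ] (h : μ ≪ ν) {ε : ℝ≥0∞} (hε : 0 < ε) :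
    ∃ δ : ℝ, 0 < δ ∧ ∀ s : Set X, MeasurableSet s → ν s ≤ ENNReal.ofReal δ → μ s ≤ ε := by
  by_contra hcon
  push_neg at hcon
  choose s hsm hsν hsμ using fun k : ℕ => hcon ((1/2 : ℝ) ^ k) (by positivity)
  have hsum : (∑' k, ν (s k)) ≠ ∞ := by
    have hle : ∀ k, ν (s k) ≤ (2⁻¹ : ℝ≥0∞) ^ k := by
      intro k
      refine (hsν k).trans_eq ?_
      rw [ENNReal.ofReal_pow (by norm_num : (0:ℝ) ≤ 1/2)]
      congr 1
      rw [one_div, ENNReal.ofReal_inv_of_pos (by norm_num)]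
      norm_num
    have : (∑' k, ν (s k)) ≤ (1 - 2⁻¹ : ℝ≥0∞)⁻¹ :=
      (ENNReal.tsum_le_tsum hle).trans_eq (ENNReal.tsum_geometric _)
    refine ne_top_of_le_ne_top ?_ this
    simp [ENNReal.sub_half]
  have hν0 : ν (limsup s atTop) = 0 := measure_limsup_atTop_eq_zero hsum
  have hμ0 : μ (limsup s atTop) = 0 := h hν0
  have hlim : limsup s atTop = ⋂ n, ⋃ k, ⋃ (_ : n ≤ k), s k := by
    rw [limsup_eq_iInf_iSup_of_nat]
    simp only [Set.iInf_eq_iInter, Set.iSup_eq_iUnion]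
  have htend : Tendsto (fun n => μ (⋃ k, ⋃ (_ : n ≤ k), s k)) atTop
      (𝓝 (μ (⋂ n, ⋃ k, ⋃ (_ : n ≤ k), s k))) :=
    tendsto_measure_iInter_atTop
      (fun n => (MeasurableSet.iUnion fun k => MeasurableSet.iUnion fun _ => hsm k).nullMeasurableSet)
      (fun n m hnm => Set.iUnion₂_mono' fun k hk => ⟨k, hnm.trans hk, subset_rfl⟩)
      ⟨0, measure_ne_top μ _⟩
  have hge : ε ≤ μ (⋂ n, ⋃ k, ⋃ (_ : n ≤ k), s k) := by
    refine ge_of_tendsto' htend fun n => ?_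
    exact (hsμ n).le.trans (measure_mono fun x hx => Set.mem_iUnion₂.mpr ⟨n, le_rfl, hx⟩)
  rw [← hlim, hμ0] at hge
  exact absurd hge (by simpa using hε.ne')


/-- If `μ_n {f_n = 0} → μ {f = 0}`, then the measure of the symmetric
difference `μ_n ({f_n = 0} Δ {f = 0}) → 0`. -/
theorem tendsto_measure_symmDiff_zero_sets
    {X : Type*} [MeasurableSpace X] (ν : Measure X) [IsFiniteMeasure ν]
    (f : ℕ → X → ℝ) (g : X → ℝ)
    (hfm : ∀ n, Measurable (f n)) (hgm : Measurable g)
    (hfpos : ∀ n x, 0 ≤ f n x) (hgpos : ∀ x, 0 ≤ g x)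
    (hae : ∀ᵐ x ∂ν, Tendsto (fun n => f n x) atTop (nhds (g x)))
    (μseq : ℕ → Measure X) (μ : Measure X)
    (hfin : ∀ n, IsFiniteMeasure (μseq n)) [IsFiniteMeasure μ]
    (hac : ∀ n, μseq n ≪ ν) (hacμ : μ ≪ ν)
    (hconv : ∀ A : Set X, MeasurableSet A →
      Tendsto (fun n => μseq n A) atTop (nhds (μ A)))
    (hzero : Tendsto (fun n => μseq n {x | f n x = 0}) atTop (nhds (μ {x | g x = 0}))) :
    Tendsto (fun n => μseq n
        (({x | f n x = 0} \ {x | g x = 0}) ∪ ({x | g x = 0} \ {x | f n x = 0})))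
      atTop (nhds 0) := by
  set B : Set X := {x | g x = 0} with hB
  have hBm : MeasurableSet B := hgm (measurableSet_singleton 0)
  have hAm : ∀ n, MeasurableSet {x | f n x = 0} := fun n => hfm n (measurableSet_singleton 0)
  -- Step 1 : μseq n ({f n = 0} \ B) → 0
  have step1 : Tendsto (fun n => μseq n ({x | f n x = 0} \ B)) atTop (𝓝 0) := by
    rw [ENNReal.tendsto_nhds_zero]
    intro ε hε
    rcases eq_or_ne ε ⊤ with rfl | hεtop
    · exact Eventually.of_forall fun n => le_top
    have hε2 : (0 : ℝ≥0∞) < ε / 2 := ENNReal.div_pos hε.ne' (by norm_num)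
    have h42 : ε / 4 < ε / 2 := by
      have htop2 : ε / 2 ≠ ⊤ := by
        rw [div_eq_mul_inv]
        exact ENNReal.mul_ne_top hεtop (by norm_num)
      have h1 : ε / 2 / 2 < ε / 2 := ENNReal.half_lt_self hε2.ne' htop2
      have h2 : ε / 2 / 2 = ε / 4 := by
        rw [div_eq_mul_inv, div_eq_mul_inv, div_eq_mul_inv, mul_assoc,
          ← ENNReal.mul_inv (Or.inl (by norm_num)) (Or.inl (by norm_num))]
        norm_num
      rw [← h2]; exact h1
    -- small-value sets of g
    set S : ℕ → Set X := fun k => {x | g x ≠ 0 ∧ g x < ((k : ℝ) + 1)⁻¹} with hS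
    have hSm : ∀ k, MeasurableSet (S k) := fun k =>
      ((hgm (measurableSet_singleton 0)).compl).inter (hgm measurableSet_Iio)
    have hSanti : Antitone S := by
      intro k l hkl x hx
      exact ⟨hx.1, hx.2.trans_le (by
        apply inv_anti₀ (by positivity)
        exact_mod_cast add_le_add_left (Nat.cast_le.mpr hkl) 1)⟩
    have hSempty : (⋂ k, S k) = ∅ := by
      ext x
      simp only [Set.mem_iInter, Set.mem_empty_iff_false, iff_false]
      intro hx
      have hx0 : 0 < g x := lt_of_le_of_ne (hgpos x) (Ne.symm (hx 0).1)
      obtain ⟨k, hk⟩ := exists_nat_gt (g x)⁻¹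
      have h1 : (g x)⁻¹ < (k : ℝ) + 1 := hk.trans (by linarith)
      exact absurd ((hx k).2) (not_lt.mpr (inv_lt_of_inv_lt₀ hx0 h1).le)
    have hStend : Tendsto (fun k => μ (S k)) atTop (𝓝 0) := by
      have := tendsto_measure_iInter_atTop (fun k => (hSm k).nullMeasurableSet) hSanti
        ⟨0, measure_ne_top μ _⟩
      rwa [hSempty, measure_empty] at this
    have hk0ev : ∀ᶠ k in atTop, μ (S k) < ε / 2 := hStend.eventually_lt_const hε2
    obtain ⟨k0, hk0⟩ := hk0ev.exists
    obtain ⟨δ, hδpos, hδ⟩ := exists_delta_of_ac hacμ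
      (show (0 : ℝ≥0∞) < ε / 4 from ENNReal.div_pos hε.ne' (by norm_num))
    obtain ⟨t, htm, htν, htu⟩ := tendstoUniformlyOn_of_ae_tendsto'
      (fun n => (hfm n).stronglyMeasurable) hgm.stronglyMeasurable hae hδpos
    have hμt : μ t < ε / 2 := (hδ t htm htν).trans_lt h42
    have ev1 : ∀ᶠ n in atTop, μseq n t < ε / 2 := (hconv t htm).eventually_lt_const hμt
    have ev2 : ∀ᶠ n in atTop, μseq n (S k0) < ε / 2 :=
      (hconv (S k0) (hSm k0)).eventually_lt_const hk0
    rw [Metric.tendstoUniformlyOn_iff] at htu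
    have ev3 := htu (((k0 : ℝ) + 1)⁻¹) (by positivity)
    filter_upwards [ev1, ev2, ev3] with n h1 h2 h3
    have hsub : {x | f n x = 0} \ B ⊆ t ∪ S k0 := by
      intro x hx
      by_cases hxt : x ∈ t
      · exact Or.inl hxt
      · refine Or.inr ⟨hx.2, ?_⟩
        have := h3 x hxt
        rw [hx.1, Real.dist_eq, sub_zero, abs_of_nonneg (hgpos x)] at this
        exact this
    refine (measure_mono hsub).trans ((measure_union_le _ _).trans ?_)
    calc μseq n t + μseq n (S k0) ≤ ε / 2 + ε / 2 := add_le_add h1.le h2.le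
    _ = ε := ENNReal.add_halves ε
  -- Step 2 : μseq n (B \ {f n = 0}) → 0
  have hABconv : Tendsto (fun n => μseq n ({x | f n x = 0} ∩ B)) atTop (𝓝 (μ B)) := by
    have heq : ∀ n, μseq n ({x | f n x = 0} ∩ B)
        = μseq n {x | f n x = 0} - μseq n ({x | f n x = 0} \ B) := by
      intro n
      haveI := hfin n
      exact ENNReal.eq_sub_of_add_eq (measure_ne_top _ _)
        (measure_inter_add_diff {x | f n x = 0} hBm)
    have := ENNReal.Tendsto.sub hzero step1 (Or.inr (by simp))
    rw [tsub_zero] at this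
    simp_rw [heq]
    exact this
  have step2 : Tendsto (fun n => μseq n (B \ {x | f n x = 0})) atTop (𝓝 0) := by
    have heq : ∀ n, μseq n (B \ {x | f n x = 0})
        = μseq n B - μseq n ({x | f n x = 0} ∩ B) := by
      intro n
      haveI := hfin n
      have h := measure_inter_add_diff (μ := μseq n) B (hAm n)
      rw [Set.inter_comm] at h
      exact ENNReal.eq_sub_of_add_eq (measure_ne_top _ _) (by rw [add_comm]; exact h)
    simp_rw [heq]
    have := ENNReal.Tendsto.sub (hconv B hBm) hABconv (Or.inl (measure_ne_top μ B))
    rwa [tsub_self] at this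
  have hsum := step1.add step2
  rw [add_zero] at hsum
  exact tendsto_of_tendsto_of_tendsto_of_le_of_le tendsto_const_nhds hsum
    (fun n => zero_le) (fun n => measure_union_le _ _)
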